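/- In the setting of the rounding-and-contraction construction, for every edge (s,t) ∈ E one has dist_H(s,t) ≤ (1 + ε₀ + 2ε)·w(s,t); consequently, H is a (1 + ε₀ + 2ε)-spanner of G. -/

import Mathlib

open scoped BigOperators

namespace Paper

variable {V : Type*}

/-- The weight of a walk: the sum of its edge weights, with multiplicity. -/
noncomputable def wWalk (w : V → V → ℝ) {G : SimpleGraph V} {u v : V} (p : G.Walk u v) : ℝ :=
  (p.darts.map fun d => w d.toProd.1 d.toProd.2).sum

/-- The distance between two vertices: the infimum of the weights of walks
between them, `⊤` if there is none. -/
noncomputable def gdist (G : SimpleGraph V) (w : V → V → ℝ) (u v : V) : EReal :=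
  ⨅ p : G.Walk u v, (wWalk w p : EReal)

/-- `H` is a `t`-spanner of `G` with respect to the weights `w`. -/
def IsSpanner (G : SimpleGraph V) (w : V → V → ℝ) (H : SimpleGraph V) (t : ℝ) : Prop :=
  H ≤ G ∧ ∀ u v : V, gdist H w u v ≤ (t : EReal) * gdist G w u v

/-- The total weight of the edges of a graph. -/
noncomputable def wGraph (G : SimpleGraph V) (w : V → V → ℝ)
    (hw : ∀ a b, w a b = w b a) : ℝ :=
  ∑ᶠ e ∈ G.edgeSet, Sym2.lift ⟨w, hw⟩ e

/-- The subgraph of `G` consisting of the edges of weight less than `c`. -/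
def lightG (G : SimpleGraph V) (w : V → V → ℝ) (c : ℝ) : SimpleGraph V :=
  SimpleGraph.fromRel fun u v => G.Adj u v ∧ w u v < c

/-- The vertices of the contracted graph: connected components spanned by the
edges of weight less than `c`. -/
abbrev CComp (G : SimpleGraph V) (w : V → V → ℝ) (c : ℝ) : Type _ :=
  (lightG G w c).ConnectedComponent

/-- The contraction map. -/
def cmk (G : SimpleGraph V) (w : V → V → ℝ) (c : ℝ) (u : V) : CComp G w c :=
  (lightG G w c).connectedComponentMk u

/-- The contracted graph `G'`: two distinct components are adjacent iff `G` has an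
edge between them. -/
def contrG (G : SimpleGraph V) (w : V → V → ℝ) (c : ℝ) : SimpleGraph (CComp G w c) :=
  SimpleGraph.fromRel fun C D => ∃ u v, G.Adj u v ∧ cmk G w c u = C ∧ cmk G w c v = D

/-- The rounded weight on the contracted graph: `⌊(minimum weight of an edge of `G`
between the two components) · fac⌋`. -/
noncomputable def cW (G : SimpleGraph V) (w : V → V → ℝ) (c fac : ℝ)
    (C D : CComp G w c) : ℝ :=
  ((⌊sInf {r : ℝ | ∃ u v, G.Adj u v ∧ w u v = r ∧
      ((cmk G w c u = C ∧ cmk G w c v = D) ∨ (cmk G w c u = D ∧ cmk G w c v = C))}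
    * fac⌋ : ℤ) : ℝ)

lemma cW_symm (G : SimpleGraph V) (w : V → V → ℝ) (c fac : ℝ) :
    ∀ C D : CComp G w c, cW G w c fac C D = cW G w c fac D C := by
  intro C D
  have h : {r : ℝ | ∃ u v, G.Adj u v ∧ w u v = r ∧
        ((cmk G w c u = C ∧ cmk G w c v = D) ∨ (cmk G w c u = D ∧ cmk G w c v = C))}
      = {r : ℝ | ∃ u v, G.Adj u v ∧ w u v = r ∧
        ((cmk G w c u = D ∧ cmk G w c v = C) ∨ (cmk G w c u = C ∧ cmk G w c v = D))} := by
    ext r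
    constructor <;> (rintro ⟨u, v, h1, h2, h3⟩; exact ⟨u, v, h1, h2, h3.symm⟩)
  unfold cW
  rw [h]

section Aux
open SimpleGraph
variable {V : Type*}
lemma wWalk_nil (w : V → V → ℝ) {G : SimpleGraph V} {u : V} :
    wWalk w (SimpleGraph.Walk.nil : G.Walk u u) = 0 := rfl

lemma wWalk_cons (w : V → V → ℝ) {G : SimpleGraph V} {u x v : V} (h : G.Adj u x)
    (p : G.Walk x v) : wWalk w (SimpleGraph.Walk.cons h p) = w u x + wWalk w p := by
  simp [wWalk]

lemma wWalk_append (w : V → V → ℝ) {G : SimpleGraph V} {u x v : V} (p : G.Walk u x)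
    (q : G.Walk x v) : wWalk w (p.append q) = wWalk w p + wWalk w q := by
  simp [wWalk, SimpleGraph.Walk.darts_append]

lemma wWalk_nonneg {w : V → V → ℝ} {G : SimpleGraph V}
    (hpos : ∀ a b, G.Adj a b → 0 ≤ w a b) {u v : V} (p : G.Walk u v) :
    0 ≤ wWalk w p := by
  induction p with
  | nil => simp [wWalk_nil]
  | cons h p ih => rw [wWalk_cons]; have := hpos _ _ h; linarith

lemma gdist_nonneg {w : V → V → ℝ} {G : SimpleGraph V}
    (hpos : ∀ a b, G.Adj a b → 0 ≤ w a b) (u v : V) :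
    (0 : EReal) ≤ gdist G w u v :=
  le_iInf fun p => by exact_mod_cast (wWalk_nonneg hpos p)

lemma gdist_le_wWalk (w : V → V → ℝ) {G : SimpleGraph V} {u v : V} (p : G.Walk u v) :
    gdist G w u v ≤ (wWalk w p : EReal) := iInf_le _ _

lemma ereal_le_of_forall {x : EReal} {B : ℝ}
    (h : ∀ δ : ℝ, 0 < δ → x ≤ ((B + δ : ℝ) : EReal)) : x ≤ (B : EReal) := by
  by_contra hc
  push_neg at hc
  have hxt : x ≠ ⊤ := by
    intro ht
    have := h 1 one_pos
    rw [ht] at this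
    exact (EReal.coe_lt_top _).not_ge this
  have hxb : x ≠ ⊥ := by
    intro hb
    rw [hb] at hc
    exact (EReal.bot_lt_coe B).not_gt hc
  rw [← EReal.coe_toReal hxt hxb] at hc h
  rw [EReal.coe_lt_coe_iff] at hc
  have h2 := h ((x.toReal - B) / 2) (by linarith)
  rw [EReal.coe_le_coe_iff] at h2
  linarith

lemma exists_walk_lt {w : V → V → ℝ} {G : SimpleGraph V} {u v : V} {B : ℝ}
    (h : gdist G w u v ≤ (B : EReal)) {δ : ℝ} (hδ : 0 < δ) :
    ∃ p : G.Walk u v, wWalk w p < B + δ := by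
  by_contra hc
  push_neg at hc
  have : ((B + δ : ℝ) : EReal) ≤ gdist G w u v :=
    le_iInf fun p => by exact_mod_cast hc p
  have := this.trans h
  rw [EReal.coe_le_coe_iff] at this
  linarith

lemma gdist_triangle {w : V → V → ℝ} {G : SimpleGraph V}
    (hpos : ∀ a b, G.Adj a b → 0 ≤ w a b) (u x v : V) :
    gdist G w u v ≤ gdist G w u x + gdist G w x v := by
  rcases eq_or_ne (gdist G w u x) ⊤ with h1 | h1
  · rw [h1, EReal.top_add_of_ne_bot]
    · exact le_top
    · exact ne_bot_of_le_ne_bot (by simp) (gdist_nonneg hpos x v)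
  rcases eq_or_ne (gdist G w x v) ⊤ with h2 | h2
  · rw [h2, EReal.add_top_of_ne_bot]
    · exact le_top
    · exact ne_bot_of_le_ne_bot (by simp) (gdist_nonneg hpos u x)
  have hb1 : gdist G w u x ≠ ⊥ := ne_bot_of_le_ne_bot (by simp) (gdist_nonneg hpos u x)
  have hb2 : gdist G w x v ≠ ⊥ := ne_bot_of_le_ne_bot (by simp) (gdist_nonneg hpos x v)
  set a := (gdist G w u x).toReal
  set b := (gdist G w x v).toReal
  rw [← EReal.coe_toReal h1 hb1, ← EReal.coe_toReal h2 hb2, ← EReal.coe_add]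
  apply ereal_le_of_forall
  intro δ hδ
  obtain ⟨p, hp⟩ := exists_walk_lt (w := w) (le_of_eq (EReal.coe_toReal h1 hb1).symm)
    (half_pos hδ)
  obtain ⟨q, hq⟩ := exists_walk_lt (w := w) (le_of_eq (EReal.coe_toReal h2 hb2).symm)
    (half_pos hδ)
  calc gdist G w u v ≤ (wWalk w (p.append q) : EReal) := gdist_le_wWalk _ _
    _ ≤ _ := by
        rw [wWalk_append, EReal.coe_le_coe_iff]
        linarith

lemma wWalk_eq_sum_edges (w : V → V → ℝ) (hw : ∀ a b, w a b = w b a)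
    {G : SimpleGraph V} {u v : V} (p : G.Walk u v) :
    wWalk w p = (p.edges.map (Sym2.lift ⟨w, hw⟩)).sum := by
  induction p with
  | nil => rfl
  | cons h p ih =>
    simp only [wWalk, Walk.darts_cons, Walk.edges_cons, List.map_cons, List.sum_cons] at *
    rw [ih]; rfl

lemma wWalk_transfer (w : V → V → ℝ) {G H : SimpleGraph V} {u v : V} (p : G.Walk u v)
    (hp : ∀ e ∈ p.edges, e ∈ H.edgeSet) :
    wWalk w (p.transfer H hp) = wWalk w p := by
  induction p with
  | nil => rfl
  | cons h p ih =>
    exact (wWalk_cons w (G := H) _ (p.transfer H _)).trans (by rw [ih, wWalk_cons])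

lemma list_toFinset_sum_le {α : Type*} [DecidableEq α] (l : List α) (f : α → ℝ)
    (hf : ∀ a, 0 ≤ f a) : ∑ a ∈ l.toFinset, f a ≤ (l.map f).sum := by
  induction l with
  | nil => simp
  | cons a l ih =>
    simp only [List.toFinset_cons, List.map_cons, List.sum_cons]
    by_cases ha : a ∈ l.toFinset
    · rw [Finset.insert_eq_self.2 ha]
      have := hf a; linarith
    · rw [Finset.sum_insert ha]; linarith

lemma wWalk_bypass_le [DecidableEq V] (w : V → V → ℝ) (hw : ∀ a b, w a b = w b a)
    (hpos : ∀ a b, 0 ≤ w a b) {G : SimpleGraph V} {u v : V} (p : G.Walk u v) :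
    wWalk w p.bypass ≤ wWalk w p := by
  rw [wWalk_eq_sum_edges w hw, wWalk_eq_sum_edges w hw]
  have hnd : p.bypass.edges.Nodup := p.bypass_isPath.edges_nodup
  rw [← List.sum_toFinset _ hnd]
  have hpos' : ∀ e : Sym2 V, 0 ≤ Sym2.lift ⟨w, hw⟩ e := by
    intro e; induction e using Sym2.inductionOn with
    | hf a b => exact hpos a b
  calc ∑ e ∈ p.bypass.edges.toFinset, Sym2.lift ⟨w, hw⟩ e
      ≤ ∑ e ∈ p.edges.toFinset, Sym2.lift ⟨w, hw⟩ e := by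
        apply Finset.sum_le_sum_of_subset_of_nonneg
        · intro e he
          rw [List.mem_toFinset] at *
          exact p.edges_bypass_subset he
        · intro e _ _; exact hpos' e
    _ ≤ _ := list_toFinset_sum_le _ _ hpos'

lemma wWalk_le_length_mul {w : V → V → ℝ} {c : ℝ} (hc : 0 ≤ c) {G : SimpleGraph V}
    (hle : ∀ a b, G.Adj a b → w a b ≤ c) {u v : V} (p : G.Walk u v) :
    wWalk w p ≤ (p.length : ℝ) * c := by
  induction p with
  | nil => simp [wWalk_nil]
  | cons h p ih =>
    rw [wWalk_cons]
    have := hle _ _ h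
    push_cast [SimpleGraph.Walk.length_cons]
    linarith

/-- The fiber of a connected component, as a finset. -/
noncomputable def fib [Fintype V] (G : SimpleGraph V) (w : V → V → ℝ) (c : ℝ)
    (C : CComp G w c) : Finset V :=
  @Finset.filter _ (fun z => cmk G w c z = C) (Classical.decPred _) Finset.univ

lemma mem_fib [Fintype V] {G : SimpleGraph V} {w : V → V → ℝ} {c : ℝ}
    {C : CComp G w c} {z : V} : z ∈ fib G w c C ↔ cmk G w c z = C := by
  simp [fib]

lemma fib_nonempty [Fintype V] {G : SimpleGraph V} {w : V → V → ℝ} {c : ℝ}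
    (C : CComp G w c) : 1 ≤ (fib G w c C).card := by
  obtain ⟨z, hz⟩ := C.exists_rep
  exact Finset.card_pos.mpr ⟨z, mem_fib.mpr hz⟩

lemma sum_fib_le [Fintype V] {G : SimpleGraph V} {w : V → V → ℝ} {c : ℝ}
    (t : Finset (CComp G w c)) :
    ∑ C ∈ t, (fib G w c C).card ≤ Fintype.card V := by
  classical
  rw [← Finset.card_biUnion]
  · exact Finset.card_le_card (Finset.subset_univ _) |>.trans_eq (Finset.card_univ)
  · intro C hC D hD hCD
    simp only [Finset.disjoint_left]
    intro z hz hz'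
    rw [mem_fib] at hz hz'
    exact hCD (hz ▸ hz'.symm ▸ rfl)

lemma lightG_adj {G : SimpleGraph V} {w : V → V → ℝ} (hw : ∀ a b, w a b = w b a)
    {c : ℝ} {a b : V} (h : (lightG G w c).Adj a b) : G.Adj a b ∧ w a b < c := by
  rw [lightG, SimpleGraph.fromRel_adj] at h
  rcases h.2 with ⟨h1, h2⟩ | ⟨h1, h2⟩
  · exact ⟨h1, h2⟩
  · exact ⟨h1.symm, by rwa [hw]⟩

/-- Walk inside a component, staying in a supergraph of the light graph. -/
lemma inComp_walk [Fintype V] {G : SimpleGraph V} {w : V → V → ℝ}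
    (hw : ∀ a b, w a b = w b a) {c : ℝ} (hc : 0 ≤ c) {H : SimpleGraph V}
    (hlight : ∀ a b, (lightG G w c).Adj a b → H.Adj a b)
    {x y : V} (hxy : cmk G w c x = cmk G w c y) :
    ∃ q : H.Walk x y, wWalk w q ≤ ((fib G w c (cmk G w c x)).card : ℝ) * c := by
  classical
  obtain ⟨p0⟩ := SimpleGraph.ConnectedComponent.eq.mp hxy
  set p := p0.bypass with hp
  have hpath := p0.bypass_isPath
  have hedges : ∀ e ∈ p.edges, e ∈ H.edgeSet := by
    intro e he
    have := p.edges_subset_edgeSet he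
    induction e using Sym2.inductionOn with
    | hf a b => exact hlight a b this
  refine ⟨p.transfer H hedges, ?_⟩
  rw [wWalk_transfer]
  have hlen : wWalk w p ≤ (p.length : ℝ) * c :=
    wWalk_le_length_mul hc (fun a b h => (lightG_adj hw h).2.le) p
  have hsupp : p.support.toFinset ⊆ fib G w c (cmk G w c x) := by
    intro z hz
    rw [List.mem_toFinset] at hz
    rw [mem_fib]
    exact (SimpleGraph.ConnectedComponent.eq.mpr ⟨p.takeUntil z hz⟩).symm
  have hcard : p.support.length ≤ (fib G w c (cmk G w c x)).card := by
    rw [← List.toFinset_card_of_nodup hpath.support_nodup]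
    exact Finset.card_le_card hsupp
  rw [SimpleGraph.Walk.length_support] at hcard
  have : (p.length : ℝ) ≤ ((fib G w c (cmk G w c x)).card : ℝ) := by
    exact_mod_cast hcard.trans' (Nat.le_succ _)
  nlinarith
theorem statement12aux [Fintype V] (G : SimpleGraph V) (w : V → V → ℝ)
    (hw : ∀ a b, w a b = w b a)
    (W : ℕ) (hWpos : 0 < W)
    (hint : ∀ u v : V, G.Adj u v → ∃ m : ℕ, 1 ≤ m ∧ m ≤ W ∧ w u v = m)
    (hn : 2 ≤ Fintype.card V)
    (ε : ℝ) (hε0 : 0 < ε) (hε : ε ≤ 1/2) (ε₀ : ℝ) (hε₀ : 0 < ε₀)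
    (c fac : ℝ)
    (hceq : c = ε * W / (Fintype.card V : ℝ)^2)
    (hfaceq : fac = (Fintype.card V : ℝ)^2 / (W * ε))
    (H' : SimpleGraph (CComp G w c))
    (hH' : IsSpanner (contrG G w c) (cW G w c fac) H' (1 + ε₀))
    (F : CComp G w c → CComp G w c → V × V)
    (hFadj : ∀ C D, H'.Adj C D → G.Adj (F C D).1 (F C D).2 ∧
        cmk G w c (F C D).1 = C ∧ cmk G w c (F C D).2 = D)
    (hFmin : ∀ C D, H'.Adj C D → ∀ u v : V, G.Adj u v →
        cmk G w c u = C → cmk G w c v = D → w (F C D).1 (F C D).2 ≤ w u v)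
    (H : SimpleGraph V)
    (hHdef : H = SimpleGraph.fromEdgeSet
        ({e ∈ G.edgeSet | Sym2.lift ⟨w, hw⟩ e ≤ (W : ℝ) / (Fintype.card V : ℝ)} ∪
         {e | ∃ C D, H'.Adj C D ∧ e = s((F C D).1, (F C D).2)})) :
    (∀ u v : V, G.Adj u v →
      gdist H w u v ≤ (((1 + ε₀ + 2 * ε) * w u v : ℝ) : EReal)) ∧
    IsSpanner G w H (1 + ε₀ + 2 * ε) := by
  classical
  have hnR : (2:ℝ) ≤ (Fintype.card V : ℝ) := by exact_mod_cast hn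
  have hnpos : (0:ℝ) < (Fintype.card V : ℝ) := by linarith
  have hW : (0:ℝ) < (W:ℝ) := by exact_mod_cast hWpos
  have hcpos : 0 < c := by
    rw [hceq]; positivity
  have hfacpos : 0 < fac := by
    rw [hfaceq]; positivity
  have hcf : c * fac = 1 := by
    rw [hceq, hfaceq]; field_simp
  have hone : ∀ a b, G.Adj a b → 1 ≤ w a b := by
    intro a b hab
    obtain ⟨m, hm1, _, hm⟩ := hint a b hab
    rw [hm]; exact_mod_cast hm1
  have hpos : ∀ a b, G.Adj a b → 0 ≤ w a b := fun a b hab => (hone a b hab).trans' zero_le_one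
  have hcWn : c ≤ (W:ℝ) / (Fintype.card V : ℝ) := by
    rw [hceq, div_le_div_iff₀ (by positivity) hnpos]
    have : ε * (Fintype.card V : ℝ) ≤ (Fintype.card V : ℝ)^2 := by nlinarith
    nlinarith
  -- nonnegativity of cW
  have hSnn : ∀ C D : CComp G w c, ∀ r ∈ {r : ℝ | ∃ u v, G.Adj u v ∧ w u v = r ∧
      ((cmk G w c u = C ∧ cmk G w c v = D) ∨ (cmk G w c u = D ∧ cmk G w c v = C))}, 0 ≤ r := by
    rintro C D r ⟨x, y, hxy, rfl, _⟩
    exact hpos x y hxy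
  have hcWnn : ∀ C D : CComp G w c, 0 ≤ cW G w c fac C D := by
    intro C D
    unfold cW
    have h0 : (0:ℝ) ≤ sInf {r : ℝ | ∃ u v, G.Adj u v ∧ w u v = r ∧
        ((cmk G w c u = C ∧ cmk G w c v = D) ∨ (cmk G w c u = D ∧ cmk G w c v = C))} :=
      Real.sInf_nonneg (hSnn C D)
    have : (0:ℤ) ≤ ⌊sInf {r : ℝ | ∃ u v, G.Adj u v ∧ w u v = r ∧
        ((cmk G w c u = C ∧ cmk G w c v = D) ∨ (cmk G w c u = D ∧ cmk G w c v = C))} * fac⌋ :=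
      Int.floor_nonneg.mpr (mul_nonneg h0 hfacpos.le)
    exact_mod_cast this
  -- H is a subgraph of G
  have hHG : H ≤ G := by
    intro a b hab
    rw [hHdef, fromEdgeSet_adj] at hab
    rcases hab.1 with h | ⟨C, D, hCD, he⟩
    · exact (mem_edgeSet _).mp h.1
    · have hG := (hFadj C D hCD).1
      have : s(a, b) ∈ G.edgeSet := by rw [he]; exact (mem_edgeSet _).mpr hG
      exact (mem_edgeSet _).mp this
  have hposH : ∀ a b, H.Adj a b → 0 ≤ w a b := fun a b hab => hpos a b (hHG hab)
  -- light edges are in H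
  have hlightH : ∀ a b, (lightG G w c).Adj a b → H.Adj a b := by
    intro a b hab
    obtain ⟨hG, hlt⟩ := lightG_adj hw hab
    rw [hHdef, fromEdgeSet_adj]
    refine ⟨Or.inl ⟨(mem_edgeSet _).mpr hG, ?_⟩, hG.ne⟩
    simp only [Sym2.lift_mk]
    calc w a b ≤ c := hlt.le
      _ ≤ (W:ℝ) / (Fintype.card V : ℝ) := hcWn
  -- F-edges are in H
  have hFH : ∀ C D, H'.Adj C D → H.Adj (F C D).1 (F C D).2 := by
    intro C D hCD
    rw [hHdef, fromEdgeSet_adj]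
    exact ⟨Or.inr ⟨C, D, hCD, rfl⟩, (hFadj C D hCD).1.ne⟩
  -- the rounded weight of an H'-edge versus the weight of its representative edge
  have hFle : ∀ C D, H'.Adj C D →
      w (F C D).1 (F C D).2 ≤ (cW G w c fac C D + 1) * c := by
    intro C D hCD
    obtain ⟨hGadj, h1, h2⟩ := hFadj C D hCD
    have hsinf : sInf {r : ℝ | ∃ u v, G.Adj u v ∧ w u v = r ∧
        ((cmk G w c u = C ∧ cmk G w c v = D) ∨ (cmk G w c u = D ∧ cmk G w c v = C))}
        = w (F C D).1 (F C D).2 := by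
      apply IsLeast.csInf_eq
      constructor
      · exact ⟨(F C D).1, (F C D).2, hGadj, rfl, Or.inl ⟨h1, h2⟩⟩
      · rintro r ⟨x, y, hxy, rfl, hor | hor⟩
        · exact hFmin C D hCD x y hxy hor.1 hor.2
        · rw [hw x y]
          exact hFmin C D hCD y x hxy.symm hor.2 hor.1
    have hfl : w (F C D).1 (F C D).2 * fac < (cW G w c fac C D) + 1 := by
      unfold cW
      rw [hsinf]
      push_cast
      exact Int.lt_floor_add_one _
    have := mul_lt_mul_of_pos_right hfl hcpos
    calc w (F C D).1 (F C D).2 = w (F C D).1 (F C D).2 * fac * c := by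
          rw [mul_assoc, mul_comm fac c, hcf, mul_one]
      _ ≤ (cW G w c fac C D + 1) * c := this.le
  -- the rounded weight is at most w * fac for any G-edge between the components
  have hcWle : ∀ a b : V, G.Adj a b →
      cW G w c fac (cmk G w c a) (cmk G w c b) ≤ w a b * fac := by
    intro a b hab
    have hmem : w a b ∈ {r : ℝ | ∃ u v, G.Adj u v ∧ w u v = r ∧
        ((cmk G w c u = cmk G w c a ∧ cmk G w c v = cmk G w c b) ∨
         (cmk G w c u = cmk G w c b ∧ cmk G w c v = cmk G w c a))} :=
      ⟨a, b, hab, rfl, Or.inl ⟨rfl, rfl⟩⟩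
    have hbdd : BddBelow {r : ℝ | ∃ u v, G.Adj u v ∧ w u v = r ∧
        ((cmk G w c u = cmk G w c a ∧ cmk G w c v = cmk G w c b) ∨
         (cmk G w c u = cmk G w c b ∧ cmk G w c v = cmk G w c a))} :=
      ⟨0, fun r hr => hSnn _ _ r hr⟩
    have h1 : sInf _ ≤ w a b := csInf_le hbdd hmem
    calc cW G w c fac (cmk G w c a) (cmk G w c b) ≤ sInf _ * fac := Int.floor_le _
      _ ≤ w a b * fac := mul_le_mul_of_nonneg_right h1 hfacpos.le
  -- the lifting of an H'-walk to an H-walk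
  have lift : ∀ (C1 D1 : CComp G w c) (p' : H'.Walk C1 D1) (a b : V),
      cmk G w c a = C1 → cmk G w c b = D1 →
      ∃ q : H.Walk a b, wWalk w q ≤
        (p'.darts.map (fun d => (cW G w c fac d.toProd.1 d.toProd.2 + 1) * c)).sum
        + (p'.support.map (fun C' => ((fib G w c C').card : ℝ) * c)).sum := by
    intro C1 D1 p'
    induction p' with
    | nil =>
      intro a b ha hb
      obtain ⟨q, hq⟩ := inComp_walk hw hcpos.le hlightH (ha.trans hb.symm)
      refine ⟨q, ?_⟩
      rw [ha] at hq
      simpa using hq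
    | @cons C1 C2 D1 hadj rest ih =>
      intro a b ha hb
      obtain ⟨hGadj, h1, h2⟩ := hFadj C1 C2 hadj
      obtain ⟨q1, hq1⟩ := inComp_walk hw hcpos.le hlightH (ha.trans h1.symm)
      obtain ⟨q2, hq2⟩ := ih (F C1 C2).2 b h2 hb
      refine ⟨q1.append (SimpleGraph.Walk.cons (hFH C1 C2 hadj) q2), ?_⟩
      rw [wWalk_append, wWalk_cons]
      simp only [SimpleGraph.Walk.darts_cons, SimpleGraph.Walk.support_cons, List.map_cons,
        List.sum_cons]
      rw [ha] at hq1
      have hF := hFle C1 C2 hadj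
      linarith
  -- the per-edge bound
  have key : ∀ u v : V, G.Adj u v →
      gdist H w u v ≤ (((1 + ε₀ + 2 * ε) * w u v : ℝ) : EReal) := by
    intro u v huv
    have h1w := hone u v huv
    by_cases hsmall : w u v ≤ (W:ℝ) / (Fintype.card V : ℝ)
    · -- the edge is in H
      have hadj : H.Adj u v := by
        rw [hHdef, fromEdgeSet_adj]
        refine ⟨Or.inl ⟨(mem_edgeSet _).mpr huv, ?_⟩, huv.ne⟩
        simpa using hsmall
      have := gdist_le_wWalk w (SimpleGraph.Walk.cons hadj SimpleGraph.Walk.nil)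
      refine this.trans ?_
      rw [wWalk_cons, wWalk_nil, EReal.coe_le_coe_iff]
      nlinarith
    · push_neg at hsmall
      by_cases hCD : cmk G w c u = cmk G w c v
      · -- same component
        obtain ⟨q, hq⟩ := inComp_walk hw hcpos.le hlightH hCD
        refine (gdist_le_wWalk w q).trans ?_
        rw [EReal.coe_le_coe_iff]
        have hcard : ((fib G w c (cmk G w c u)).card : ℝ) ≤ (Fintype.card V : ℝ) := by
          exact_mod_cast Finset.card_le_card (Finset.subset_univ _) |>.trans_eq Finset.card_univ
        have hnc : (Fintype.card V : ℝ) * c ≤ ε * w u v := by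
          have h1 : (Fintype.card V : ℝ) * c = ε * ((W:ℝ) / (Fintype.card V : ℝ)) := by
            rw [hceq]; field_simp
          rw [h1]
          exact mul_le_mul_of_nonneg_left hsmall.le hε0.le
        have : wWalk w q ≤ ε * w u v := by
          refine hq.trans ?_
          refine le_trans ?_ hnc
          exact mul_le_mul_of_nonneg_right hcard hcpos.le
        nlinarith
      · -- different components: use the spanner H'
        have hG'adj : (contrG G w c).Adj (cmk G w c u) (cmk G w c v) := by
          rw [contrG, fromRel_adj]
          exact ⟨hCD, Or.inl ⟨u, v, huv, rfl, rfl⟩⟩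
        have hg1 : gdist (contrG G w c) (cW G w c fac) (cmk G w c u) (cmk G w c v)
            ≤ ((cW G w c fac (cmk G w c u) (cmk G w c v) : ℝ) : EReal) := by
          have := gdist_le_wWalk (cW G w c fac)
            (SimpleGraph.Walk.cons hG'adj SimpleGraph.Walk.nil)
          rw [wWalk_cons, wWalk_nil, add_zero] at this
          exact this
        have hg0 := gdist_nonneg (G := contrG G w c) (w := cW G w c fac)
          (fun a b _ => hcWnn a b) (cmk G w c u) (cmk G w c v)
        have hgT : gdist (contrG G w c) (cW G w c fac) (cmk G w c u) (cmk G w c v) ≠ ⊤ :=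
          fun h => by rw [h] at hg1; exact (EReal.coe_lt_top _).not_ge hg1
        have hgB : gdist (contrG G w c) (cW G w c fac) (cmk G w c u) (cmk G w c v) ≠ ⊥ :=
          ne_bot_of_le_ne_bot (by simp) hg0
        set g' := (gdist (contrG G w c) (cW G w c fac) (cmk G w c u) (cmk G w c v)).toReal
          with hg'
        have hgeq : ((g' : ℝ) : EReal)
            = gdist (contrG G w c) (cW G w c fac) (cmk G w c u) (cmk G w c v) :=
          EReal.coe_toReal hgT hgB
        have hg'le : g' ≤ cW G w c fac (cmk G w c u) (cmk G w c v) := by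
          rw [← EReal.coe_le_coe_iff, hgeq]; exact hg1
        have hH'le : gdist H' (cW G w c fac) (cmk G w c u) (cmk G w c v)
            ≤ (((1 + ε₀) * cW G w c fac (cmk G w c u) (cmk G w c v) : ℝ) : EReal) := by
          refine (hH'.2 (cmk G w c u) (cmk G w c v)).trans ?_
          rw [← hgeq, ← EReal.coe_mul, EReal.coe_le_coe_iff]
          exact mul_le_mul_of_nonneg_left hg'le (by linarith)
        apply ereal_le_of_forall
        intro δ' hδ'
        obtain ⟨p₀, hp₀⟩ := exists_walk_lt hH'le (div_pos hδ' hcpos)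
        have hpw : wWalk (cW G w c fac) p₀.bypass ≤ wWalk (cW G w c fac) p₀ :=
          wWalk_bypass_le _ (cW_symm G w c fac) (fun a b => hcWnn a b) p₀
        have hpath := p₀.bypass_isPath
        obtain ⟨q, hq⟩ := lift _ _ p₀.bypass u v rfl rfl
        -- sums over the path
        set p'' := p₀.bypass with hp''
        have hdart : (p''.darts.map (fun d => (cW G w c fac d.toProd.1 d.toProd.2 + 1) * c)).sum
            = c * wWalk (cW G w c fac) p'' + (p''.length : ℝ) * c := by
          rw [wWalk, ← SimpleGraph.Walk.length_darts]
          generalize p''.darts = l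
          induction l with
          | nil => simp
          | cons d l ihl => push_cast [List.map_cons, List.sum_cons, List.length_cons] at ihl ⊢; rw [ihl]; ring
        have hsuppsum : (p''.support.map (fun C' => ((fib G w c C').card : ℝ) * c)).sum
            = ((∑ C' ∈ p''.support.toFinset, (fib G w c C').card : ℕ) : ℝ) * c := by
          rw [← List.sum_toFinset _ hpath.support_nodup]
          push_cast
          rw [Finset.sum_mul]
        set S : ℕ := ∑ C' ∈ p''.support.toFinset, (fib G w c C').card with hS
        have hSn : (S:ℝ) ≤ (Fintype.card V : ℝ) := by
          exact_mod_cast sum_fib_le p''.support.toFinset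
        have hk1 : (p''.length : ℝ) + 1 ≤ (S:ℝ) := by
          have h1 : p''.length + 1 = p''.support.toFinset.card := by
            rw [List.toFinset_card_of_nodup hpath.support_nodup,
              SimpleGraph.Walk.length_support]
          have h2 : p''.support.toFinset.card ≤ S := by
            rw [hS, Finset.card_eq_sum_ones]
            exact Finset.sum_le_sum (fun C' _ => fib_nonempty C')
          exact_mod_cast h1 ▸ h2
        have hnc : (Fintype.card V : ℝ) * c ≤ ε * w u v := by
          have h1 : (Fintype.card V : ℝ) * c = ε * ((W:ℝ) / (Fintype.card V : ℝ)) := by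
            rw [hceq]; field_simp
          rw [h1]
          exact mul_le_mul_of_nonneg_left hsmall.le hε0.le
        have hA : wWalk (cW G w c fac) p'' < (1 + ε₀) * cW G w c fac (cmk G w c u) (cmk G w c v) + δ' / c :=
          lt_of_le_of_lt hpw hp₀
        have h1 : c * cW G w c fac (cmk G w c u) (cmk G w c v) ≤ w u v := by
          have h2 := mul_le_mul_of_nonneg_left (hcWle u v huv) hcpos.le
          calc c * cW G w c fac (cmk G w c u) (cmk G w c v) ≤ c * (w u v * fac) := h2
            _ = w u v * (c * fac) := by ring
            _ = w u v := by rw [hcf, mul_one]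
        have hcA : c * wWalk (cW G w c fac) p''
            ≤ (1 + ε₀) * (c * cW G w c fac (cmk G w c u) (cmk G w c v)) + δ' := by
          have h2 := mul_le_mul_of_nonneg_left hA.le hcpos.le
          have h3 : c * (δ' / c) = δ' := by field_simp
          calc c * wWalk (cW G w c fac) p''
              ≤ c * ((1 + ε₀) * cW G w c fac (cmk G w c u) (cmk G w c v) + δ' / c) := h2
            _ = (1 + ε₀) * (c * cW G w c fac (cmk G w c u) (cmk G w c v)) + c * (δ' / c) := by
                ring
            _ = _ := by rw [h3]
        have hkc : (p''.length : ℝ) * c ≤ ε * w u v := by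
          have : (p''.length : ℝ) ≤ (Fintype.card V : ℝ) := by linarith
          calc (p''.length : ℝ) * c ≤ (Fintype.card V : ℝ) * c :=
              mul_le_mul_of_nonneg_right this hcpos.le
            _ ≤ ε * w u v := hnc
        have hSc : (S:ℝ) * c ≤ ε * w u v := by
          calc (S:ℝ) * c ≤ (Fintype.card V : ℝ) * c :=
              mul_le_mul_of_nonneg_right hSn hcpos.le
            _ ≤ ε * w u v := hnc
        have hfin : wWalk w q ≤ (1 + ε₀ + 2 * ε) * w u v + δ' := by
          rw [hdart, hsuppsum] at hq
          have h4 : (1 + ε₀) * (c * cW G w c fac (cmk G w c u) (cmk G w c v))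
              ≤ (1 + ε₀) * w u v := mul_le_mul_of_nonneg_left h1 (by linarith)
          push_cast at hq
          linarith [hq, hcA, h4, hkc, hSc]
        refine (gdist_le_wWalk w q).trans ?_
        rw [EReal.coe_le_coe_iff]
        linarith
  refine ⟨key, hHG, ?_⟩
  -- the spanner property
  have tpos : (0:ℝ) < 1 + ε₀ + 2 * ε := by linarith
  have hwalkG : ∀ (a b : V) (p : G.Walk a b),
      gdist H w a b ≤ (((1 + ε₀ + 2 * ε) * wWalk w p : ℝ) : EReal) := by
    intro a b p
    induction p with
    | @nil x =>
      have := gdist_le_wWalk w (SimpleGraph.Walk.nil : H.Walk x x)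
      rw [wWalk_nil] at this
      simpa [wWalk_nil] using this
    | @cons a x b hadj rest ih =>
      refine (gdist_triangle hposH a x b).trans ?_
      have h2 := key a x hadj
      have h3 := add_le_add h2 ih
      refine h3.trans ?_
      rw [← EReal.coe_add, EReal.coe_le_coe_iff, wWalk_cons]
      ring_nf
      exact le_refl _
  intro u v
  by_cases hT : gdist G w u v = ⊤
  · rw [hT, EReal.mul_top_of_pos (by exact_mod_cast tpos)]
    exact le_top
  · have hg0 := gdist_nonneg (G := G) (w := w) hpos u v
    have hgB : gdist G w u v ≠ ⊥ := ne_bot_of_le_ne_bot (by simp) hg0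
    have hgeq : (((gdist G w u v).toReal : ℝ) : EReal) = gdist G w u v :=
      EReal.coe_toReal hT hgB
    set g := (gdist G w u v).toReal with hg
    rw [← hgeq, ← EReal.coe_mul]
    apply ereal_le_of_forall
    intro δ' hδ'
    obtain ⟨p, hp⟩ := exists_walk_lt (le_of_eq hgeq.symm) (div_pos hδ' tpos)
    refine (hwalkG u v p).trans ?_
    rw [EReal.coe_le_coe_iff]
    have h2 : (1 + ε₀ + 2 * ε) * wWalk w p ≤ (1 + ε₀ + 2 * ε) * (g + δ' / (1 + ε₀ + 2 * ε)) :=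
      mul_le_mul_of_nonneg_left hp.le tpos.le
    have h3 : (1 + ε₀ + 2 * ε) * (δ' / (1 + ε₀ + 2 * ε)) = δ' := by field_simp
    nlinarith

end Aux
/-- in the rounding-and-contraction construction, the resulting subgraph
`H` of `G` satisfies `dist_H(s,t) ≤ (1+ε₀+2ε)·w(s,t)` for every edge `(s,t)` of `G`;
consequently `H` is a `(1+ε₀+2ε)`-spanner of `G`. -/
theorem statement12 [Fintype V] (G : SimpleGraph V) (w : V → V → ℝ)
    (hw : ∀ a b, w a b = w b a)
    (W : ℕ) (hWpos : 0 < W)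
    (hint : ∀ u v : V, G.Adj u v → ∃ m : ℕ, 1 ≤ m ∧ m ≤ W ∧ w u v = m)
    (hn : 2 ≤ Fintype.card V)
    (ε : ℝ) (hε0 : 0 < ε) (hε : ε ≤ 1/2) (ε₀ : ℝ) (hε₀ : 0 < ε₀)
    (H' : SimpleGraph (CComp G w (ε * W / (Fintype.card V : ℝ)^2)))
    (hH' : IsSpanner (contrG G w (ε * W / (Fintype.card V : ℝ)^2))
        (cW G w (ε * W / (Fintype.card V : ℝ)^2) ((Fintype.card V : ℝ)^2 / (W * ε)))
        H' (1 + ε₀))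
    (F : CComp G w (ε * W / (Fintype.card V : ℝ)^2) →
         CComp G w (ε * W / (Fintype.card V : ℝ)^2) → V × V)
    (hFadj : ∀ C D, H'.Adj C D → G.Adj (F C D).1 (F C D).2 ∧
        cmk G w _ (F C D).1 = C ∧ cmk G w _ (F C D).2 = D)
    (hFmin : ∀ C D, H'.Adj C D → ∀ u v : V, G.Adj u v →
        cmk G w _ u = C → cmk G w _ v = D → w (F C D).1 (F C D).2 ≤ w u v)
    (H : SimpleGraph V)
    (hHdef : H = SimpleGraph.fromEdgeSet
        ({e ∈ G.edgeSet | Sym2.lift ⟨w, hw⟩ e ≤ (W : ℝ) / (Fintype.card V : ℝ)} ∪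
         {e | ∃ C D, H'.Adj C D ∧ e = s((F C D).1, (F C D).2)})) :
    (∀ u v : V, G.Adj u v →
      gdist H w u v ≤ (((1 + ε₀ + 2 * ε) * w u v : ℝ) : EReal)) ∧
    IsSpanner G w H (1 + ε₀ + 2 * ε) := by
  exact statement12aux G w hw W hWpos hint hn ε hε0 hε ε₀ hε₀ _ _ rfl rfl H' hH' F hFadj hFmin H hHdef

end Paper
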